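/- Let G_n be the toroidal mesh of size n with the majority coloring process of threshold 2. If p = p(n) satisfies 1.65/ln(n) ≤ p(n) ≤ 1 for all sufficiently large n, then the probability (under the product Bernoulli(p(n)) measure) that the random seed set S^p is a dynamo on G_n tends to 1 as n → ∞. -/

import Mathlib

open MeasureTheory Filter

/-- The toroidal mesh of size `n`: vertices `(ZMod n) × (ZMod n)`, with `(i,j)`
adjacent to `(i±1,j)` and `(i,j±1)`. -/
def torus (n : ℕ) : SimpleGraph (ZMod n × ZMod n) :=
  SimpleGraph.fromRel (fun v w => w = (v.1 + 1, v.2) ∨ w = (v.1, v.2 + 1))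

/-- One step of the majority coloring process with threshold 2: a vertex turns black
if it has at least two black neighbors; black vertices stay black. -/
def colorStep {V : Type*} (G : SimpleGraph V) (S : Set V) : Set V :=
  S ∪ {v | ∃ u w, u ≠ w ∧ G.Adj v u ∧ G.Adj v w ∧ u ∈ S ∧ w ∈ S}

/-- `S` is a dynamo if every vertex eventually turns black. -/
def IsDynamo {V : Type*} (G : SimpleGraph V) (S : Set V) : Prop :=
  ∀ v, ∃ t, v ∈ (colorStep G)^[t] S

/-- The Bernoulli(p) measure on `Bool`. -/
noncomputable def bernoulliMeasure (p : ℝ) : Measure Bool :=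
  ENNReal.ofReal p • Measure.dirac true + ENNReal.ofReal (1 - p) • Measure.dirac false

instance (p : ℝ) : IsFiniteMeasure (bernoulliMeasure p) := by
  constructor
  simp [bernoulliMeasure, ENNReal.add_lt_top, ENNReal.ofReal_lt_top]

/-- The product Bernoulli(p) measure on subsets (indicator functions) of `V`. -/
noncomputable def seedMeasure (V : Type*) [Fintype V] (p : ℝ) : Measure (V → Bool) :=
  Measure.pi fun _ => bernoulliMeasure p


set_option linter.unusedSectionVars false
set_option maxHeartbeats 1000000
set_option linter.unusedTactic false

open Finset

section Meas
variable {V : Type*} [Fintype V] {p : ℝ}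

lemma bern_apply (s : Set Bool) [Decidable (true ∈ s)] [Decidable (false ∈ s)] :
    bernoulliMeasure p s = (if true ∈ s then ENNReal.ofReal p else 0)
      + (if false ∈ s then ENNReal.ofReal (1-p) else 0) := by
  simp only [bernoulliMeasure, Measure.coe_add, Measure.coe_smul, Pi.add_apply, Pi.smul_apply,
    Measure.dirac_apply' _ (Set.Finite.measurableSet (Set.toFinite s)), Set.indicator_apply,
    smul_eq_mul]
  split <;> split <;> simp

lemma bern_true : bernoulliMeasure p {true} = ENNReal.ofReal p := by
  rw [bern_apply]; simp

lemma bern_false : bernoulliMeasure p {false} = ENNReal.ofReal (1-p) := by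
  rw [bern_apply]; simp

lemma bern_univ (h0 : 0 ≤ p) (h1 : p ≤ 1) : bernoulliMeasure p Set.univ = 1 := by
  rw [bern_apply]
  simp only [Set.mem_univ, if_true]
  rw [← ENNReal.ofReal_add h0 (by linarith)]
  norm_num

lemma bern_prob (h0 : 0 ≤ p) (h1 : p ≤ 1) : IsProbabilityMeasure (bernoulliMeasure p) :=
  ⟨bern_univ h0 h1⟩

lemma seed_prob (h0 : 0 ≤ p) (h1 : p ≤ 1) : IsProbabilityMeasure (seedMeasure V p) := by
  haveI := bern_prob (p := p) h0 h1
  exact MeasureTheory.Measure.pi.instIsProbabilityMeasure _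

lemma meas_all (s : Set (V → Bool)) : MeasurableSet s :=
  Set.Finite.measurableSet (Set.toFinite s)

lemma seed_cyl (c : V → Set Bool) :
    seedMeasure V p {f | ∀ v, f v ∈ c v} = ∏ v, bernoulliMeasure p (c v) := by
  have : {f : V → Bool | ∀ v, f v ∈ c v} = Set.pi Set.univ c := by
    ext f; simp [Set.mem_pi]
  rw [this, seedMeasure, Measure.pi_pi]

lemma seed_allFalse (h0 : 0 ≤ p) (h1 : p ≤ 1) (s : Finset V) :
    seedMeasure V p {f | ∀ v ∈ s, f v = false} = ENNReal.ofReal (1-p) ^ s.card := by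
  classical
  have h : {f : V → Bool | ∀ v ∈ s, f v = false}
      = {f : V → Bool | ∀ v, f v ∈ (if v ∈ s then ({false} : Set Bool) else Set.univ)} := by
    ext f
    simp only [Set.mem_setOf_eq]
    constructor
    · intro h v; split <;> simp_all
    · intro h v hv; have := h v; simp_all
  rw [h, seed_cyl]
  calc ∏ v : V, bernoulliMeasure p (if v ∈ s then ({false} : Set Bool) else Set.univ)
      = ∏ v : V, (if v ∈ s then ENNReal.ofReal (1-p) else 1) := by
        refine Finset.prod_congr rfl fun v _ => ?_
        split
        · exact bern_false
        · exact bern_univ h0 h1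
    _ = ENNReal.ofReal (1-p) ^ s.card := by
        rw [Finset.prod_ite_mem, Finset.inter_comm, Finset.inter_univ, Finset.prod_const]

lemma seed_existsTrue (h0 : 0 ≤ p) (h1 : p ≤ 1) (s : Finset V) :
    seedMeasure V p {f | ∃ v ∈ s, f v = true} = 1 - ENNReal.ofReal (1-p) ^ s.card := by
  haveI := seed_prob (V := V) h0 h1
  have hc : {f : V → Bool | ∃ v ∈ s, f v = true} = {f : V → Bool | ∀ v ∈ s, f v = false}ᶜ := by
    ext f; simp [Set.mem_setOf_eq]
  rw [hc, prob_compl_eq_one_sub (meas_all _), seed_allFalse h0 h1]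

/-- `A` depends only on coordinates in `T`. -/
def DepOn {V : Type*} (A : Set (V → Bool)) (T : Set V) : Prop :=
  ∀ f g : V → Bool, (∀ v ∈ T, f v = g v) → f ∈ A → g ∈ A

lemma DepOn.mono {A : Set (V → Bool)} {T T' : Set V} (h : DepOn A T) (hT : T ⊆ T') :
    DepOn A T' := fun f g hfg => h f g fun v hv => hfg v (hT hv)

lemma indep_inter (h0 : 0 ≤ p) (h1 : p ≤ 1) (T : Set V) (A B : Set (V → Bool))
    (hA : DepOn A T) (hB : DepOn B Tᶜ) :
    seedMeasure V p (A ∩ B) = seedMeasure V p A * seedMeasure V p B := by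
  classical
  haveI := bern_prob (p := p) h0 h1
  set P : V → Prop := fun v => v ∈ T with hP
  let e := MeasurableEquiv.piEquivPiSubtypeProd (fun _ : V => Bool) P
  have mp := MeasureTheory.measurePreserving_piEquivPiSubtypeProd
    (fun _ : V => bernoulliMeasure p) P
  set μ1 : Measure ({v // P v} → Bool) := Measure.pi fun _ => bernoulliMeasure p with hμ1
  set μ2 : Measure ({v // ¬ P v} → Bool) := Measure.pi fun _ => bernoulliMeasure p with hμ2
  haveI : IsProbabilityMeasure μ1 := MeasureTheory.Measure.pi.instIsProbabilityMeasure _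
  haveI : IsProbabilityMeasure μ2 := MeasureTheory.Measure.pi.instIsProbabilityMeasure _
  set A' : Set ({v // P v} → Bool) :=
    {g | (fun v => if h : P v then g ⟨v, h⟩ else false) ∈ A} with hA'
  set B' : Set ({v // ¬ P v} → Bool) :=
    {g | (fun v => if h : P v then false else g ⟨v, h⟩) ∈ B} with hB'
  have he : ∀ f : V → Bool, e f = (fun v : {v // P v} => f v, fun v : {v // ¬ P v} => f v) := by
    intro f; rfl
  have hmemA : ∀ f : V → Bool, f ∈ A ↔ (fun v : {v // P v} => f v) ∈ A' := by
    intro f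
    constructor
    · intro hf
      exact hA f _ (fun v hv => by simp [dif_pos (show P v from hv)]) hf
    · intro hf
      exact hA _ f (fun v hv => by simp [dif_pos (show P v from hv)]) hf
  have hmemB : ∀ f : V → Bool, f ∈ B ↔ (fun v : {v // ¬ P v} => f v) ∈ B' := by
    intro f
    constructor
    · intro hf
      refine hB f _ (fun v hv => ?_) hf
      have : ¬ P v := hv
      simp [dif_neg this]
    · intro hf
      refine hB _ f (fun v hv => ?_) hf
      have : ¬ P v := hv
      simp [dif_neg this]
  have hAe : A = e ⁻¹' (A' ×ˢ Set.univ) := by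
    ext f
    simp only [Set.mem_preimage, he, Set.mem_prod, Set.mem_univ, and_true]
    exact hmemA f
  have hBe : B = e ⁻¹' (Set.univ ×ˢ B') := by
    ext f
    simp only [Set.mem_preimage, he, Set.mem_prod, Set.mem_univ, true_and]
    exact hmemB f
  have hABe : A ∩ B = e ⁻¹' (A' ×ˢ B') := by
    rw [hAe, hBe, ← Set.preimage_inter, Set.prod_inter_prod, Set.univ_inter, Set.inter_univ]
  have hmeas : ∀ s : Set (({v // P v} → Bool) × ({v // ¬ P v} → Bool)), MeasurableSet s :=
    fun s => Set.Finite.measurableSet (Set.toFinite s)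
  have hseed : seedMeasure V p = Measure.pi fun _ : V => bernoulliMeasure p := rfl
  rw [hABe, hAe, hBe, hseed, mp.measure_preimage (hmeas _).nullMeasurableSet,
    mp.measure_preimage (hmeas _).nullMeasurableSet,
    mp.measure_preimage (hmeas _).nullMeasurableSet]
  rw [Measure.prod_prod, Measure.prod_prod, Measure.prod_prod]
  simp [measure_univ]

lemma indep_prod {ι : Type*} [DecidableEq ι] (h0 : 0 ≤ p) (h1 : p ≤ 1) (m : Finset ι)
    (T : ι → Set V) (A : ι → Set (V → Bool))
    (hdis : ∀ i ∈ m, ∀ j ∈ m, i ≠ j → Disjoint (T i) (T j))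
    (hA : ∀ i ∈ m, DepOn (A i) (T i)) :
    seedMeasure V p (⋂ i ∈ m, A i) = ∏ i ∈ m, seedMeasure V p (A i) := by
  classical
  haveI := seed_prob (V := V) h0 h1
  induction m using Finset.induction with
  | empty => simp
  | @insert i m hi ih =>
    rw [Finset.prod_insert hi, Finset.set_biInter_insert]
    rw [indep_inter h0 h1 (T i) _ _ (hA i (Finset.mem_insert_self i m)) ?_]
    · rw [ih (fun a ha b hb hab => hdis a (Finset.mem_insert_of_mem ha) b
        (Finset.mem_insert_of_mem hb) hab)
        (fun a ha => hA a (Finset.mem_insert_of_mem ha))]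
    · intro f g hfg hf
      rw [Set.mem_iInter₂] at hf ⊢
      intro j hj
      refine hA j (Finset.mem_insert_of_mem hj) f g (fun v hv => ?_) (hf j hj)
      refine hfg v ?_
      intro hvT
      exact (hdis i (Finset.mem_insert_self i m) j (Finset.mem_insert_of_mem hj)
        (fun h => hi (h ▸ hj)) ).le_bot ⟨hvT, hv⟩


end Meas

section Det
variable {V : Type*} {G : SimpleGraph V} {S : Set V}

def Reach (G : SimpleGraph V) (S : Set V) (v : V) : Prop := ∃ t, v ∈ (colorStep G)^[t] S

lemma subset_colorStep : S ⊆ colorStep G S := Set.subset_union_left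

lemma iterate_subset_succ (t : ℕ) : (colorStep G)^[t] S ⊆ (colorStep G)^[t+1] S := by
  rw [Function.iterate_succ_apply']
  exact subset_colorStep

lemma iterate_subset {t t' : ℕ} (h : t ≤ t') : (colorStep G)^[t] S ⊆ (colorStep G)^[t'] S := by
  induction t' with
  | zero => simp_all
  | succ t' ih =>
    rcases Nat.lt_or_ge t (t'+1) with h' | h'
    · exact (ih (Nat.lt_succ_iff.mp h')).trans (iterate_subset_succ t')
    · have : t = t' + 1 := le_antisymm h h'
      subst this; rfl

lemma reach_of_mem {v : V} (hv : v ∈ S) : Reach G S v := ⟨0, hv⟩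

lemma reach_step {v u w : V} (huw : u ≠ w) (hu : G.Adj v u) (hw : G.Adj v w)
    (h1 : Reach G S u) (h2 : Reach G S w) : Reach G S v := by
  obtain ⟨t1, h1⟩ := h1
  obtain ⟨t2, h2⟩ := h2
  refine ⟨max t1 t2 + 1, ?_⟩
  rw [Function.iterate_succ_apply']
  exact Set.mem_union_right _ ⟨u, w, huw, hu, hw,
    iterate_subset (le_max_left t1 t2) h1, iterate_subset (le_max_right t1 t2) h2⟩

/-- 1-dimensional spreading along a path with reached supports. -/
lemma spread (c s' : ℕ → V) (m i₀ : ℕ) (hi₀ : i₀ < m)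
    (hseed : c i₀ ∈ S)
    (hsup : ∀ i < m, Reach G S (s' i))
    (hadj : ∀ i, i + 1 < m → G.Adj (c i) (c (i+1)))
    (hadjs : ∀ i < m, G.Adj (c i) (s' i))
    (hne : ∀ i < m, ∀ j < m, c i ≠ s' j) :
    ∀ i < m, Reach G S (c i) := by
  have up : ∀ d, i₀ + d < m → Reach G S (c (i₀ + d)) := by
    intro d
    induction d with
    | zero => exact fun _ => reach_of_mem hseed
    | succ d ih =>
      intro hd
      have hd2 : i₀ + d + 1 < m := hd
      have hd' : i₀ + d < m := Nat.lt_of_succ_lt hd2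
      exact reach_step (hne _ hd' _ hd2) ((hadj _ hd2).symm) (hadjs _ hd2) (ih hd')
        (hsup _ hd2)
  have down : ∀ d, d ≤ i₀ → Reach G S (c (i₀ - d)) := by
    intro d
    induction d with
    | zero => exact fun _ => reach_of_mem hseed
    | succ d ih =>
      intro hd
      have heq : i₀ - (d+1) + 1 = i₀ - d := by omega
      have hlt : i₀ - (d+1) < m := by omega
      have hlt' : i₀ - d < m := by omega
      have hu : G.Adj (c (i₀ - (d+1))) (c (i₀ - d)) := by
        have := hadj (i₀ - (d+1)) (by omega)
        rwa [heq] at this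
      exact reach_step (hne _ hlt' _ hlt) hu (hadjs _ hlt) (ih (by omega)) (hsup _ hlt)
  intro i hi
  rcases le_or_gt i₀ i with h | h
  · have : i = i₀ + (i - i₀) := by omega
    rw [this]; exact up _ (by omega)
  · have : i = i₀ - (i₀ - i) := by omega
    rw [this]; exact down _ (by omega)

end Det

section Torus
variable {N : ℕ}

lemma tadj_v (hone : (1 : ZMod N) ≠ 0) (x y : ZMod N) : (torus N).Adj (x, y) (x + 1, y) := by
  rw [torus, SimpleGraph.fromRel_adj]
  refine ⟨?_, Or.inl (Or.inl rfl)⟩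
  intro h
  have := congrArg Prod.fst h
  simp only at this
  exact hone (by linear_combination -this)

lemma tadj_h (hone : (1 : ZMod N) ≠ 0) (x y : ZMod N) : (torus N).Adj (x, y) (x, y + 1) := by
  rw [torus, SimpleGraph.fromRel_adj]
  refine ⟨?_, Or.inl (Or.inr rfl)⟩
  intro h
  have := congrArg Prod.snd h
  simp only at this
  exact hone (by linear_combination -this)

/-- The main deterministic growth lemma: a nucleus plus seeds in every column/row increment
implies every vertex is eventually reached. -/
lemma torus_growth (hN : 1 < N) {S : Set (ZMod N × ZMod N)} (a b : ZMod N)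
    (Hseed : (a, b) ∈ S)
    (Hcol : ∀ k : ℕ, 1 ≤ k → ∃ i < k, ((a + (i:ZMod N)), (b + (k:ZMod N))) ∈ S)
    (Hrow : ∀ k : ℕ, 1 ≤ k → ∃ j < k + 1, ((a + (k:ZMod N)), (b + (j:ZMod N))) ∈ S) :
    ∀ v, Reach (torus N) S v := by
  haveI : NeZero N := ⟨by omega⟩
  haveI : Fact (1 < N) := ⟨hN⟩
  have hone : (1 : ZMod N) ≠ 0 := one_ne_zero
  set G := torus N
  -- square induction
  have Q : ∀ k : ℕ, ∀ i < k, ∀ j < k, Reach G S (a + (i:ZMod N), b + (j:ZMod N)) := by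
    intro k
    induction k with
    | zero => omega
    | succ k ih =>
      rcases Nat.eq_zero_or_pos k with rfl | hk
      · intro i hi j hj
        interval_cases i
        interval_cases j
        simpa using reach_of_mem Hseed
      -- column phase
      obtain ⟨i₀, hi₀, hcolseed⟩ := Hcol k hk
      have colreach : ∀ i < k, Reach G S (a + (i:ZMod N), b + (k:ZMod N)) := by
        have := spread (G := G) (S := S)
          (fun i => (a + (i:ZMod N), b + (k:ZMod N)))
          (fun i => (a + (i:ZMod N), b + ((k-1:ℕ):ZMod N))) k i₀ hi₀ hcolseed
          (fun i hi => ih i hi (k-1) (by omega))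
          (fun i hi => by
            have h1 : ((i+1:ℕ) : ZMod N) = (i:ZMod N) + 1 := by push_cast; ring
            rw [h1, ← add_assoc]
            exact tadj_v hone _ _)
          (fun i hi => by
            have h1 : ((k:ℕ) : ZMod N) = ((k-1:ℕ):ZMod N) + 1 := by
              conv_lhs => rw [show k = (k-1)+1 by omega]
              push_cast; ring
            rw [h1, ← add_assoc]
            exact (tadj_h hone _ _).symm)
          (fun i hi j hj => by
            intro h
            have h2 := congrArg Prod.snd h
            simp only at h2
            have hkk : ((k:ℕ) : ZMod N) = ((k-1:ℕ):ZMod N) + 1 := by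
              conv_lhs => rw [show k = (k-1)+1 by omega]
              push_cast; ring
            rw [hkk] at h2
            exact hone (by linear_combination h2))
        exact this
      -- row phase
      obtain ⟨j₀, hj₀, hrowseed⟩ := Hrow k hk
      have rowreach : ∀ j < k + 1, Reach G S (a + (k:ZMod N), b + (j:ZMod N)) := by
        have hkk : ((k:ℕ) : ZMod N) = ((k-1:ℕ):ZMod N) + 1 := by
          conv_lhs => rw [show k = (k-1)+1 by omega]
          push_cast; ring
        have := spread (G := G) (S := S)
          (fun j => (a + (k:ZMod N), b + (j:ZMod N)))
          (fun j => (a + ((k-1:ℕ):ZMod N), b + (j:ZMod N))) (k+1) j₀ hj₀ hrowseed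
          (fun j hj => by
            rcases Nat.lt_or_ge j k with h | h
            · exact ih (k-1) (by omega) j h
            · have hjk : j = k := by omega
              rw [hjk]
              exact colreach (k-1) (by omega))
          (fun j hj => by
            have h1 : ((j+1:ℕ) : ZMod N) = (j:ZMod N) + 1 := by push_cast; ring
            rw [h1, ← add_assoc]
            exact tadj_h hone _ _)
          (fun j hj => by
            rw [hkk, ← add_assoc]
            exact (tadj_v hone _ _).symm)
          (fun i hi j hj => by
            intro h
            have h2 := congrArg Prod.fst h
            simp only at h2
            rw [hkk] at h2
            exact hone (by linear_combination h2))
        exact this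
      intro i hi j hj
      rcases Nat.lt_or_ge i k with h1 | h1
      · rcases Nat.lt_or_ge j k with h2 | h2
        · exact ih i h1 j h2
        · have : j = k := by omega
          subst this
          exact colreach i h1
      · have : i = k := by omega
        subst this
        exact rowreach j hj
  intro v
  have h1 : v.1 = a + (((v.1 - a).val : ℕ) : ZMod N) := by
    rw [ZMod.natCast_val, ZMod.cast_id]
    ring
  have h2 : v.2 = b + (((v.2 - b).val : ℕ) : ZMod N) := by
    rw [ZMod.natCast_val, ZMod.cast_id]
    ring
  have := Q N _ (ZMod.val_lt (v.1 - a)) _ (ZMod.val_lt (v.2 - b))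
  rwa [← h1, ← h2] at this

end Torus


lemma geom_tail_le {r : ℝ} (h0 : 0 ≤ r) (h1 : r < 1) (K : ℕ) :
    ∑ k ∈ Icc 1 K, r ^ k ≤ r / (1 - r) := by
  have h1r : 0 < 1 - r := by linarith
  have e0 : ∑ k ∈ Icc 1 K, r ^ k = r * ∑ i ∈ range K, r ^ i := by
    have : Icc 1 K = Ico 1 (K+1) := by rw [Finset.Ico_add_one_right_eq_Icc]
    rw [this, sum_Ico_eq_sum_range]
    simp only [Nat.add_sub_cancel]
    rw [mul_sum]
    refine sum_congr rfl fun i _ => ?_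
    rw [pow_add, pow_one]
  rw [e0]
  have hgeo : ∑ i ∈ range K, r ^ i ≤ 1 / (1 - r) := by
    rw [geom_sum_eq (by linarith : r ≠ 1) K]
    have e1 : (r ^ K - 1) / (r - 1) = (1 - r ^ K) / (1 - r) := by
      rw [← neg_sub (r:ℝ) 1, ← neg_sub (r^K) 1, neg_div_neg_eq]
    rw [e1]
    have h2 : (0:ℝ) ≤ r ^ K := pow_nonneg h0 K
    gcongr
    linarith
  calc r * ∑ i ∈ range K, r ^ i ≤ r * (1 / (1-r)) := mul_le_mul_of_nonneg_left hgeo h0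
    _ = r / (1-r) := by ring

lemma basel_shift : HasSum (fun m : ℕ => 1 / ((m:ℝ) + 1) ^ 2) (Real.pi ^ 2 / 6) := by
  have h : HasSum (fun n : ℕ => 1/(n:ℝ)^2) (Real.pi^2/6 + ∑ i ∈ range 1, 1/(i:ℝ)^2) := by
    simpa using hasSum_zeta_two
  have h2 := (hasSum_nat_add_iff (f := fun n : ℕ => 1/(n:ℝ)^2) 1).mpr h
  norm_num at h2
  convert h2 using 2 with m
  push_cast
  rfl
  ring

/-- The key analytic estimate : `∏_{k=1}^K (1-(1-p)^k) ≥ exp(-(π²/6)/p)`. -/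
lemma prod_one_sub_pow_ge {p : ℝ} (h0 : 0 < p) (h1 : p ≤ 1) (K : ℕ) :
    Real.exp (-(Real.pi ^ 2 / 6) / p) ≤ ∏ k ∈ Icc 1 K, (1 - (1-p) ^ k) := by
  set q := 1 - p with hq
  have hq0 : 0 ≤ q := by simp [hq]; linarith
  have hq1 : q < 1 := by simp [hq]; linarith
  have hpos : ∀ k ∈ Icc 1 K, 0 < 1 - q ^ k := by
    intro k hk
    simp only [mem_Icc] at hk
    have : q ^ k < 1 := pow_lt_one₀ hq0 hq1 (by omega)
    linarith
  rcases eq_or_lt_of_le hq0 with hq0' | hq0'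
  · -- q = 0
    have : ∏ k ∈ Icc 1 K, (1 - q ^ k) = 1 := by
      apply prod_eq_one
      intro k hk
      simp only [mem_Icc] at hk
      rw [← hq0', zero_pow (by omega)]
      ring
    rw [this]
    exact Real.exp_le_one_iff.mpr (by
      apply div_nonpos_of_nonpos_of_nonneg
      · have := Real.pi_pos; nlinarith
      · linarith)
  · -- 0 < q < 1
    set lam := -Real.log q with hlam
    have hlam0 : 0 < lam := by
      simp only [hlam, neg_pos]
      exact Real.log_neg hq0' hq1
    have hplam : p ≤ lam := by
      have := Real.log_le_sub_one_of_pos hq0'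
      simp only [hlam]
      linarith [this]
    have hqexp : q = Real.exp (-lam) := by
      rw [hlam, neg_neg, Real.exp_log hq0']
    -- the log-sum bound
    have key : ∑ k ∈ Icc 1 K, -Real.log (1 - q ^ k) ≤ (Real.pi ^ 2 / 6) / lam := by
      -- expand each log as a series
      have hexpand : ∀ k ∈ Icc 1 K, HasSum (fun m : ℕ => (q ^ k) ^ (m+1) / (m+1))
          (-Real.log (1 - q ^ k)) := by
        intro k hk
        apply Real.hasSum_pow_div_log_of_abs_lt_one
        rw [abs_of_nonneg (pow_nonneg hq0 k)]
        simp only [mem_Icc] at hk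
        exact pow_lt_one₀ hq0 hq1 (by omega)
      have hswap : ∑ k ∈ Icc 1 K, -Real.log (1 - q ^ k)
          = ∑' m : ℕ, ∑ k ∈ Icc 1 K, (q ^ k) ^ (m+1) / (m+1) := by
        rw [Summable.tsum_finsetSum (fun k hk => (hexpand k hk).summable)]
        exact sum_congr rfl fun k hk => ((hexpand k hk).tsum_eq).symm
      rw [hswap]
      -- term-wise bound
      have hterm : ∀ m : ℕ, ∑ k ∈ Icc 1 K, (q ^ k) ^ (m+1) / (m+1)
          ≤ 1 / (lam * ((m:ℝ)+1)^2) := by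
        intro m
        have e1 : ∀ k, (q ^ k) ^ (m+1) / ((m:ℝ)+1) = (q^(m+1)) ^ k / ((m:ℝ)+1) := by
          intro k; rw [← pow_mul, mul_comm k (m+1), pow_mul]
        simp only [e1]
        rw [← sum_div]
        have hr0 : 0 ≤ q ^ (m+1) := pow_nonneg hq0 _
        have hr1 : q ^ (m+1) < 1 := pow_lt_one₀ hq0 hq1 (by omega)
        have hgeom := geom_tail_le hr0 hr1 K
        have hm1 : (0:ℝ) < (m:ℝ) + 1 := by positivity
        have hfrac : q^(m+1) / (1 - q^(m+1)) ≤ 1 / (lam * ((m:ℝ)+1)) := by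
          rw [div_le_div_iff₀ (by linarith) (by positivity)]
          -- q^(m+1) * (lam * (m+1)) ≤ 1 - q^(m+1)
          have hexp : 1 + lam * ((m:ℝ)+1) ≤ Real.exp (lam * ((m:ℝ)+1)) := by
            have := Real.add_one_le_exp (lam * ((m:ℝ)+1))
            linarith
          have hqm : q ^ (m+1) = Real.exp (-(lam * ((m:ℝ)+1))) := by
            rw [hqexp, ← Real.exp_nat_mul]
            congr 1
            push_cast
            ring
          have hmul : Real.exp (-(lam * ((m:ℝ)+1))) * (1 + lam * ((m:ℝ)+1)) ≤ 1 := by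
            have h := mul_le_mul_of_nonneg_left hexp (Real.exp_nonneg (-(lam * ((m:ℝ)+1))))
            rwa [← Real.exp_add, neg_add_cancel, Real.exp_zero] at h
          rw [hqm]
          nlinarith [Real.exp_pos (-(lam * ((m:ℝ)+1)))]
        calc (∑ k ∈ Icc 1 K, (q^(m+1))^k) / ((m:ℝ)+1)
            ≤ (q^(m+1) / (1 - q^(m+1))) / ((m:ℝ)+1) := by
              gcongr
          _ ≤ (1 / (lam * ((m:ℝ)+1))) / ((m:ℝ)+1) := by
              gcongr
          _ = 1 / (lam * ((m:ℝ)+1)^2) := by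
              field_simp
      -- sum the bound
      have hsum : ∑' m : ℕ, 1 / (lam * ((m:ℝ)+1)^2) = (Real.pi^2/6) / lam := by
        have := basel_shift.div_const lam
        rw [← this.tsum_eq]
        congr 1 with m
        field_simp
      have hsummand : Summable (fun m : ℕ => 1 / (lam * ((m:ℝ)+1)^2)) :=
        (basel_shift.div_const lam).summable.congr (fun m => by field_simp)
      have hlhs : Summable (fun m : ℕ => ∑ k ∈ Icc 1 K, (q ^ k)^(m+1)/((m:ℝ)+1)) :=
        Summable.of_nonneg_of_le
          (fun m => sum_nonneg fun k _ => by positivity) hterm hsummand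
      rw [← hsum]
      exact Summable.tsum_le_tsum hterm hlhs hsummand
    -- convert back from logs
    have hprod : ∏ k ∈ Icc 1 K, (1 - q ^ k)
        = Real.exp (∑ k ∈ Icc 1 K, Real.log (1 - q ^ k)) := by
      rw [Real.exp_sum]
      exact (prod_congr rfl fun k hk => (Real.exp_log (hpos k hk)).symm)
    rw [hprod]
    apply Real.exp_le_exp.mpr
    have h2 : -((Real.pi^2/6)/lam) ≤ ∑ k ∈ Icc 1 K, Real.log (1 - q ^ k) := by
      have hkey := key
      rw [show (∑ k ∈ Icc 1 K, -Real.log (1 - q^k))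
          = -∑ k ∈ Icc 1 K, Real.log (1 - q^k) by rw [Finset.sum_neg_distrib]] at hkey
      linarith
    have hx : (Real.pi^2/6)/lam ≤ (Real.pi^2/6)/p := by
      rw [div_le_div_iff₀ hlam0 h0]
      have hpi : (0:ℝ) ≤ Real.pi^2/6 := by positivity
      nlinarith
    calc -(Real.pi^2/6) / p ≤ -((Real.pi^2/6)/lam) := by
          rw [neg_div]
          exact neg_le_neg hx
      _ ≤ ∑ k ∈ Icc 1 K, Real.log (1 - q ^ k) := h2


section Events
variable (N : ℕ) [NeZero N]

abbrev TV (N : ℕ) := ZMod N × ZMod N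

/-- The nucleation blocks at `(a,b)`: `(k, false)` is "row `k` has a seed",
`(k, true)` is "column `k` has a seed". -/
def blk (a b : ZMod N) : ℕ × Bool → Set (TV N → Bool)
  | (k, false) => {f | ∃ j < k + 1, f (a + (k:ZMod N), b + (j:ZMod N)) = true}
  | (k, true) => {f | ∃ i < k, f (a + (i:ZMod N), b + (k:ZMod N)) = true}

/-- coordinate sets of blocks -/
def blkT (a b : ZMod N) : ℕ × Bool → Set (TV N)
  | (k, false) => {w | ∃ j < k + 1, w = (a + (k:ZMod N), b + (j:ZMod N))}
  | (k, true) => {w | ∃ i < k, w = (a + (i:ZMod N), b + (k:ZMod N))}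

def mIdx (K : ℕ) : Finset (ℕ × Bool) := (range K ×ˢ {false}) ∪ (Icc 1 (K-1) ×ˢ {true})

def Nuc (K : ℕ) (a b : ZMod N) : Set (TV N → Bool) := ⋂ x ∈ mIdx K, blk N a b x

lemma natCast_inj_lt {u u' : ℕ} (hu : u < N) (hu' : u' < N) (h : (u : ZMod N) = u') :
    u = u' := by
  have := congrArg ZMod.val h
  rwa [ZMod.val_cast_of_lt hu, ZMod.val_cast_of_lt hu'] at this

lemma good_implies_dynamo (hN : 1 < N) (K : ℕ) (hK : 1 ≤ K) (f : TV N → Bool) (a b : ZMod N)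
    (h1 : ∀ v : TV N, ∃ i < K, f (v.1 + (i:ZMod N), v.2) = true)
    (h2 : ∀ v : TV N, ∃ j < K, f (v.1, v.2 + (j:ZMod N)) = true)
    (hnuc : f ∈ Nuc N K a b) : IsDynamo (torus N) {v | f v = true} := by
  have hblk : ∀ x ∈ mIdx K, f ∈ blk N a b x := by
    intro x hx
    exact Set.mem_iInter₂.mp hnuc x hx
  have Hseed : (a, b) ∈ {v : TV N | f v = true} := by
    have h0 : ((0:ℕ), false) ∈ mIdx K := by
      simp [mIdx]
      omega
    obtain ⟨j, hj, hfj⟩ := hblk _ h0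
    interval_cases j
    simpa using hfj
  have Hcol : ∀ k : ℕ, 1 ≤ k → ∃ i < k,
      ((a + (i:ZMod N)), (b + (k:ZMod N))) ∈ {v : TV N | f v = true} := by
    intro k hk
    rcases Nat.lt_or_ge k K with h | h
    · have hm : ((k:ℕ), true) ∈ mIdx K := by
        simp [mIdx]
        omega
      obtain ⟨i, hi, hfi⟩ := hblk _ hm
      exact ⟨i, hi, hfi⟩
    · obtain ⟨i, hi, hfi⟩ := h1 (a, b + (k:ZMod N))
      exact ⟨i, lt_of_lt_of_le hi h, hfi⟩
  have Hrow : ∀ k : ℕ, 1 ≤ k → ∃ j < k + 1,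
      ((a + (k:ZMod N)), (b + (j:ZMod N))) ∈ {v : TV N | f v = true} := by
    intro k hk
    rcases Nat.lt_or_ge k K with h | h
    · have hm : ((k:ℕ), false) ∈ mIdx K := by
        simp [mIdx]
        omega
      obtain ⟨j, hj, hfj⟩ := hblk _ hm
      exact ⟨j, hj, hfj⟩
    · obtain ⟨j, hj, hfj⟩ := h2 (a + (k:ZMod N), b)
      exact ⟨j, by omega, hfj⟩
  exact torus_growth hN a b Hseed Hcol Hrow

end Events



section Prob
variable (N : ℕ) [NeZero N] {p : ℝ}

lemma blk_depOn (a b : ZMod N) (x : ℕ × Bool) : DepOn (blk N a b x) (blkT N a b x) := by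
  obtain ⟨k, _ | _⟩ := x <;>
  · intro f g hfg hf
    obtain ⟨j, hj, hfj⟩ := hf
    refine ⟨j, hj, ?_⟩
    rw [← hfg _ ⟨j, hj, rfl⟩]
    exact hfj

lemma blkT_disj (hKN : K ≤ N) (a b : ZMod N) :
    ∀ x ∈ mIdx K, ∀ y ∈ mIdx K, x ≠ y → Disjoint (blkT N a b x) (blkT N a b y) := by
  have hmem : ∀ x ∈ mIdx K, x.1 < K := by
    intro x hx
    simp only [mIdx, Finset.mem_union, Finset.mem_product, Finset.mem_range, Finset.mem_Icc,
      Finset.mem_singleton] at hx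
    rcases hx with ⟨h, _⟩ | ⟨h, _⟩ <;> omega
  intro x hx y hy hxy
  rw [Set.disjoint_left]
  rintro w hw hw'
  obtain ⟨k, bx⟩ := x
  obtain ⟨k', by'⟩ := y
  have hk := hmem _ hx
  have hk' := hmem _ hy
  simp only at hk hk'
  -- the membership hypothesis for (k, true) also forces entries < k
  have key : ∀ (u u' t t' : ℕ), u < K → u' < K → t < K → t' < K →
      (a + (u:ZMod N), b + (t:ZMod N)) = (a + (u':ZMod N), b + (t':ZMod N)) →
      u = u' ∧ t = t' := by
    intro u u' t t' h1 h2 h3 h4 heq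
    have e1 := congrArg Prod.fst heq
    have e2 := congrArg Prod.snd heq
    simp only at e1 e2
    constructor
    · exact natCast_inj_lt N (by omega) (by omega) (by
        have : (u : ZMod N) = (u' : ZMod N) := by linear_combination e1
        exact this)
    · exact natCast_inj_lt N (by omega) (by omega) (by
        have : (t : ZMod N) = (t' : ZMod N) := by linear_combination e2
        exact this)
  cases bx <;> cases by'
  · -- both rows: k ≠ k'
    obtain ⟨j, hj, rfl⟩ := hw
    obtain ⟨j', hj', heq⟩ := hw'
    have := key k k' j j' hk hk' (by omega) (by omega) heq
    exact hxy (by simp [this.1])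
  · -- x row, y column (k' ≥ 1, entries (a+i, b+k') with i < k')
    obtain ⟨j, hj, rfl⟩ := hw
    obtain ⟨i, hi, heq⟩ := hw'
    have := key k i j k' hk (by omega) (by omega) hk' heq
    omega
  · -- x column, y row
    obtain ⟨i, hi, rfl⟩ := hw
    obtain ⟨j, hj, heq⟩ := hw'
    have := key i k' k j (by omega) hk' hk (by omega) heq
    omega
  · -- both columns
    obtain ⟨i, hi, rfl⟩ := hw
    obtain ⟨i', hi', heq⟩ := hw'
    have := key i i' k k' (by omega) (by omega) hk hk' heq
    exact hxy (by simp [this.2])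

lemma blk_prob (h0 : 0 ≤ p) (h1 : p ≤ 1) {K : ℕ} (hKN : K ≤ N) (a b : ZMod N)
    (x : ℕ × Bool) (hx : x ∈ mIdx K) :
    seedMeasure (TV N) p (blk N a b x)
      = 1 - ENNReal.ofReal (1-p) ^ (if x.2 then x.1 else x.1 + 1) := by
  classical
  have hmem : x.1 < K ∧ (x.2 = true → 1 ≤ x.1) := by
    simp only [mIdx, Finset.mem_union, Finset.mem_product, Finset.mem_range, Finset.mem_Icc,
      Finset.mem_singleton] at hx
    obtain ⟨k, bx⟩ := x
    rcases hx with ⟨h, h2⟩ | ⟨h, h2⟩ <;> simp_all <;> omega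
  obtain ⟨k, bx⟩ := x
  cases bx
  · -- row block: k+1 cells
    have hcard : ((range (k+1)).image (fun j : ℕ => (a + (k:ZMod N), b + (j:ZMod N)))).card
        = k + 1 := by
      rw [Finset.card_image_of_injOn ?_, Finset.card_range]
      intro u hu u' hu' huu
      simp only [Finset.coe_range, Set.mem_Iio, Finset.mem_range] at hu hu'
      have := congrArg Prod.snd huu
      simp only at this
      exact natCast_inj_lt N (by omega) (by omega) (by linear_combination this)
    have hset : blk N a b (k, false)
        = {f : TV N → Bool | ∃ v ∈ (range (k+1)).image
            (fun j : ℕ => (a + (k:ZMod N), b + (j:ZMod N))), f v = true} := by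
      ext f
      simp only [blk, Set.mem_setOf_eq, Finset.mem_image, Finset.mem_range]
      constructor
      · rintro ⟨j, hj, hfj⟩
        exact ⟨_, ⟨j, hj, rfl⟩, hfj⟩
      · rintro ⟨v, ⟨j, hj, rfl⟩, hfj⟩
        exact ⟨j, hj, hfj⟩
    rw [hset, seed_existsTrue h0 h1, hcard]
    simp
  · -- column block: k cells
    have hcard : ((range k).image (fun i : ℕ => (a + (i:ZMod N), b + (k:ZMod N)))).card = k := by
      rw [Finset.card_image_of_injOn ?_, Finset.card_range]
      intro u hu u' hu' huu
      simp only [Finset.coe_range, Set.mem_Iio, Finset.mem_range] at hu hu'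
      have := congrArg Prod.fst huu
      simp only at this
      exact natCast_inj_lt N (by omega) (by omega) (by linear_combination this)
    have hset : blk N a b (k, true)
        = {f : TV N → Bool | ∃ v ∈ (range k).image
            (fun i : ℕ => (a + (i:ZMod N), b + (k:ZMod N))), f v = true} := by
      ext f
      simp only [blk, Set.mem_setOf_eq, Finset.mem_image, Finset.mem_range]
      constructor
      · rintro ⟨i, hi, hfi⟩
        exact ⟨_, ⟨i, hi, rfl⟩, hfi⟩
      · rintro ⟨v, ⟨i, hi, rfl⟩, hfi⟩
        exact ⟨i, hi, hfi⟩
    rw [hset, seed_existsTrue h0 h1, hcard]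
    simp

lemma nuc_prob (h0 : 0 ≤ p) (h1 : p ≤ 1) {K : ℕ} (hK : 1 ≤ K) (hKN : K ≤ N) (a b : ZMod N) :
    seedMeasure (TV N) p (Nuc N K a b)
      = (∏ k ∈ range K, (1 - ENNReal.ofReal (1-p) ^ (k+1)))
        * ∏ k ∈ Icc 1 (K-1), (1 - ENNReal.ofReal (1-p) ^ k) := by
  classical
  rw [Nuc, indep_prod h0 h1 (mIdx K) (blkT N a b) (blk N a b) (blkT_disj N hKN a b)
    (fun x _ => blk_depOn N a b x)]
  have hdisj : Disjoint ((range K) ×ˢ ({false} : Finset Bool))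
      ((Icc 1 (K-1)) ×ˢ ({true} : Finset Bool)) := by
    rw [Finset.disjoint_left]
    rintro ⟨k, bx⟩ hx hy
    simp only [Finset.mem_product, Finset.mem_singleton] at hx hy
    rw [hx.2] at hy
    exact Bool.false_ne_true hy.2
  rw [mIdx, Finset.prod_union hdisj]
  congr 1
  · rw [Finset.prod_product]
    simp only [Finset.prod_singleton]
    refine Finset.prod_congr rfl fun k hk => ?_
    rw [blk_prob N h0 h1 hKN a b (k, false) (by simp [mIdx]; simp at hk; omega)]
    simp
  · rw [Finset.prod_product]
    simp only [Finset.prod_singleton]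
    refine Finset.prod_congr rfl fun k hk => ?_
    rw [blk_prob N h0 h1 hKN a b (k, true) (by simp [mIdx]; simp at hk; omega)]
    simp

end Prob

section Boxes
variable (N : ℕ) [NeZero N] {p : ℝ}

lemma depOn_compl {V : Type*} {A : Set (V → Bool)} {T : Set V} (h : DepOn A T) :
    DepOn Aᶜ T := by
  intro f g hfg hf hg
  exact hf (h g f (fun v hv => (hfg v hv).symm) hg)

def boxT (K : ℕ) (rs : ℕ × ℕ) : Set (TV N) :=
  {w | ∃ u < K, ∃ t < K, w = (((K * rs.1 + u : ℕ) : ZMod N), ((K * rs.2 + t : ℕ) : ZMod N))}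

lemma nuc_depOn (K : ℕ) (rs : ℕ × ℕ) :
    DepOn (Nuc N K ((K * rs.1 : ℕ) : ZMod N) ((K * rs.2 : ℕ) : ZMod N)) (boxT N K rs) := by
  intro f g hfg hf
  rw [Nuc, Set.mem_iInter₂] at hf ⊢
  intro x hx
  have hk : x.1 < K ∧ (x.2 = true → 1 ≤ x.1) := by
    obtain ⟨k, bx⟩ := x
    simp only [mIdx, Finset.mem_union, Finset.mem_product, Finset.mem_range, Finset.mem_Icc,
      Finset.mem_singleton] at hx
    rcases hx with ⟨h, h2⟩ | ⟨h, h2⟩ <;> simp_all <;> omega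
  have hmem := hf x hx
  obtain ⟨k, bx⟩ := x
  cases bx
  · obtain ⟨j, hj, hfj⟩ := hmem
    refine ⟨j, hj, ?_⟩
    rw [← hfg _ ⟨k, hk.1, j, by omega, by push_cast; ring_nf⟩]
    exact hfj
  · obtain ⟨i, hi, hfi⟩ := hmem
    refine ⟨i, hi, ?_⟩
    rw [← hfg _ ⟨i, by omega, k, hk.1, by push_cast; ring_nf⟩]
    exact hfi

lemma boxT_disj {K M₀ : ℕ} (hK : 0 < K) (hKM : K * M₀ ≤ N) :
    ∀ x ∈ (range M₀) ×ˢ (range M₀), ∀ y ∈ (range M₀) ×ˢ (range M₀), x ≠ y →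
      Disjoint (boxT N K x) (boxT N K y) := by
  intro x hx y hy hxy
  simp only [Finset.mem_product, Finset.mem_range] at hx hy
  rw [Set.disjoint_left]
  rintro w ⟨u, hu, t, ht, rfl⟩ ⟨u', hu', t', ht', heq⟩
  have e1 := congrArg Prod.fst heq
  have e2 := congrArg Prod.snd heq
  simp only at e1 e2
  have b1 : K * x.1 + u < N := by nlinarith [hx.1, hu]
  have b1' : K * y.1 + u' < N := by nlinarith [hy.1, hu']
  have b2 : K * x.2 + t < N := by nlinarith [hx.2, ht]
  have b2' : K * y.2 + t' < N := by nlinarith [hy.2, ht']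
  have i1 := natCast_inj_lt N b1 b1' e1
  have i2 := natCast_inj_lt N b2 b2' e2
  have d1 : x.1 = y.1 := by
    have h1 : (K * x.1 + u) / K = x.1 := by
      rw [Nat.mul_add_div hK, Nat.div_eq_of_lt hu, add_zero]
    have h2 : (K * y.1 + u') / K = y.1 := by
      rw [Nat.mul_add_div hK, Nat.div_eq_of_lt hu', add_zero]
    rw [← h1, ← h2, i1]
  have d2 : x.2 = y.2 := by
    have h1 : (K * x.2 + t) / K = x.2 := by
      rw [Nat.mul_add_div hK, Nat.div_eq_of_lt ht, add_zero]
    have h2 : (K * y.2 + t') / K = y.2 := by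
      rw [Nat.mul_add_div hK, Nat.div_eq_of_lt ht', add_zero]
    rw [← h1, ← h2, i2]
  exact hxy (Prod.ext d1 d2)

lemma badnuc_prob (h0 : 0 ≤ p) (h1 : p ≤ 1) {K M₀ : ℕ} (hK : 1 ≤ K) (hKN : K ≤ N)
    (hKM : K * M₀ ≤ N) :
    seedMeasure (TV N) p
      (⋂ rs ∈ (range M₀) ×ˢ (range M₀), (Nuc N K ((K * rs.1 : ℕ) : ZMod N)
        ((K * rs.2 : ℕ) : ZMod N))ᶜ)
      = (1 - ((∏ k ∈ range K, (1 - ENNReal.ofReal (1-p) ^ (k+1)))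
        * ∏ k ∈ Icc 1 (K-1), (1 - ENNReal.ofReal (1-p) ^ k))) ^ (M₀ * M₀) := by
  classical
  haveI := seed_prob (V := TV N) h0 h1
  rw [indep_prod h0 h1 _ (boxT N K) _ (boxT_disj N (by omega) hKM)
    (fun rs _ => depOn_compl (nuc_depOn N K rs))]
  have heach : ∀ rs ∈ (range M₀) ×ˢ (range M₀),
      seedMeasure (TV N) p ((Nuc N K ((K * rs.1 : ℕ) : ZMod N) ((K * rs.2 : ℕ) : ZMod N))ᶜ)
      = 1 - ((∏ k ∈ range K, (1 - ENNReal.ofReal (1-p) ^ (k+1)))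
        * ∏ k ∈ Icc 1 (K-1), (1 - ENNReal.ofReal (1-p) ^ k)) := by
    intro rs _
    rw [prob_compl_eq_one_sub (meas_all _), nuc_prob N h0 h1 hK hKN]
  rw [Finset.prod_congr rfl heach, Finset.prod_const, Finset.card_product, Finset.card_range]

lemma bad1_prob (h0 : 0 ≤ p) (h1 : p ≤ 1) {K : ℕ} (hKN : K ≤ N) :
    seedMeasure (TV N) p (⋃ v : TV N, {f | ∀ i < K, f (v.1 + (i:ZMod N), v.2) = false})
      ≤ (N:ENNReal)^2 * ENNReal.ofReal (1-p)^K := by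
  classical
  refine le_trans (measure_iUnion_fintype_le _ _) (le_of_eq ?_)
  have heach : ∀ v : TV N,
      seedMeasure (TV N) p {f | ∀ i < K, f (v.1 + (i:ZMod N), v.2) = false}
        = ENNReal.ofReal (1-p)^K := by
    intro v
    have hset : {f : TV N → Bool | ∀ i < K, f (v.1 + (i:ZMod N), v.2) = false}
        = {f : TV N → Bool | ∀ w ∈ (range K).image
            (fun i : ℕ => (v.1 + (i:ZMod N), v.2)), f w = false} := by
      ext f
      simp only [Set.mem_setOf_eq, Finset.mem_image, Finset.mem_range]
      constructor
      · rintro h w ⟨i, hi, rfl⟩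
        exact h i hi
      · intro h i hi
        exact h _ ⟨i, hi, rfl⟩
    have hcard : ((range K).image (fun i : ℕ => (v.1 + (i:ZMod N), v.2))).card = K := by
      rw [Finset.card_image_of_injOn ?_, Finset.card_range]
      intro u hu u' hu' huu
      simp only [Finset.coe_range, Set.mem_Iio] at hu hu'
      have := congrArg Prod.fst huu
      simp only at this
      exact natCast_inj_lt N (by omega) (by omega) (by linear_combination this)
    rw [hset, seed_allFalse h0 h1, hcard]
  calc ∑ v : TV N, seedMeasure (TV N) p {f | ∀ i < K, f (v.1 + (i:ZMod N), v.2) = false}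
      = ∑ _v : TV N, ENNReal.ofReal (1-p)^K := Finset.sum_congr rfl (fun v _ => heach v)
    _ = (Fintype.card (TV N)) * ENNReal.ofReal (1-p)^K := by
        rw [Finset.sum_const, nsmul_eq_mul, Finset.card_univ]
    _ = (N:ENNReal)^2 * ENNReal.ofReal (1-p)^K := by
        congr 1
        rw [Fintype.card_prod, ZMod.card]
        push_cast
        ring

lemma bad2_prob (h0 : 0 ≤ p) (h1 : p ≤ 1) {K : ℕ} (hKN : K ≤ N) :
    seedMeasure (TV N) p (⋃ v : TV N, {f | ∀ j < K, f (v.1, v.2 + (j:ZMod N)) = false})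
      ≤ (N:ENNReal)^2 * ENNReal.ofReal (1-p)^K := by
  classical
  refine le_trans (measure_iUnion_fintype_le _ _) (le_of_eq ?_)
  have heach : ∀ v : TV N,
      seedMeasure (TV N) p {f | ∀ j < K, f (v.1, v.2 + (j:ZMod N)) = false}
        = ENNReal.ofReal (1-p)^K := by
    intro v
    have hset : {f : TV N → Bool | ∀ j < K, f (v.1, v.2 + (j:ZMod N)) = false}
        = {f : TV N → Bool | ∀ w ∈ (range K).image
            (fun j : ℕ => (v.1, v.2 + (j:ZMod N))), f w = false} := by
      ext f
      simp only [Set.mem_setOf_eq, Finset.mem_image, Finset.mem_range]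
      constructor
      · rintro h w ⟨j, hj, rfl⟩
        exact h j hj
      · intro h j hj
        exact h _ ⟨j, hj, rfl⟩
    have hcard : ((range K).image (fun j : ℕ => (v.1, v.2 + (j:ZMod N)))).card = K := by
      rw [Finset.card_image_of_injOn ?_, Finset.card_range]
      intro u hu u' hu' huu
      simp only [Finset.coe_range, Set.mem_Iio] at hu hu'
      have := congrArg Prod.snd huu
      simp only at this
      exact natCast_inj_lt N (by omega) (by omega) (by linear_combination this)
    rw [hset, seed_allFalse h0 h1, hcard]
  calc ∑ v : TV N, seedMeasure (TV N) p {f | ∀ j < K, f (v.1, v.2 + (j:ZMod N)) = false}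
      = ∑ _v : TV N, ENNReal.ofReal (1-p)^K := Finset.sum_congr rfl (fun v _ => heach v)
    _ = (Fintype.card (TV N)) * ENNReal.ofReal (1-p)^K := by
        rw [Finset.sum_const, nsmul_eq_mul, Finset.card_univ]
    _ = (N:ENNReal)^2 * ENNReal.ofReal (1-p)^K := by
        congr 1
        rw [Fintype.card_prod, ZMod.card]
        push_cast
        ring

lemma dyn_compl_subset (hN : 1 < N) (K M₀ : ℕ) (hK : 1 ≤ K) :
    {f : TV N → Bool | IsDynamo (torus N) {v | f v = true}}ᶜ ⊆
      (⋃ v : TV N, {f | ∀ i < K, f (v.1 + (i:ZMod N), v.2) = false}) ∪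
      (⋃ v : TV N, {f | ∀ j < K, f (v.1, v.2 + (j:ZMod N)) = false}) ∪
      (⋂ rs ∈ (range M₀) ×ˢ (range M₀), (Nuc N K ((K * rs.1 : ℕ) : ZMod N)
        ((K * rs.2 : ℕ) : ZMod N))ᶜ) := by
  intro f hf
  by_contra hcon
  apply hf
  simp only [Set.mem_union, not_or] at hcon
  obtain ⟨⟨hb1, hb2⟩, hb3⟩ := hcon
  have h1 : ∀ v : TV N, ∃ i < K, f (v.1 + (i:ZMod N), v.2) = true := by
    intro v
    have : f ∉ {g : TV N → Bool | ∀ i < K, g (v.1 + (i:ZMod N), v.2) = false} :=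
      fun h => hb1 (Set.mem_iUnion.mpr ⟨v, h⟩)
    simp only [Set.mem_setOf_eq, not_forall] at this
    obtain ⟨i, hi, hne⟩ := this
    exact ⟨i, hi, by simpa using hne⟩
  have h2 : ∀ v : TV N, ∃ j < K, f (v.1, v.2 + (j:ZMod N)) = true := by
    intro v
    have : f ∉ {g : TV N → Bool | ∀ j < K, g (v.1, v.2 + (j:ZMod N)) = false} :=
      fun h => hb2 (Set.mem_iUnion.mpr ⟨v, h⟩)
    simp only [Set.mem_setOf_eq, not_forall] at this
    obtain ⟨j, hj, hne⟩ := this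
    exact ⟨j, hj, by simpa using hne⟩
  have h3 : ∃ rs ∈ (range M₀) ×ˢ (range M₀),
      f ∈ Nuc N K ((K * rs.1 : ℕ) : ZMod N) ((K * rs.2 : ℕ) : ZMod N) := by
    by_contra hcon3
    push_neg at hcon3
    exact hb3 (Set.mem_iInter₂.mpr fun rs hrs => hcon3 rs hrs)
  obtain ⟨rs, _, hnuc⟩ := h3
  exact good_implies_dynamo N hN K hK f _ _ h1 h2 hnuc

end Boxes



section Endgame

noncomputable def Bnd (L : ℝ) : ℝ :=
  2 * Real.exp (-(1.3) * L) + Real.exp (-(Real.exp ((2 - Real.pi^2/4.95) * L) / (25 * L^4)))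

lemma compl_bound (n : ℕ) (pn : ℝ)
    (hplo : 1.65 / Real.log ((n+1 : ℕ) : ℝ) ≤ pn) (hp1 : pn ≤ 1)
    (hL : 2 ≤ Real.log ((n+1 : ℕ) : ℝ))
    (hE3 : 5 * (Real.log ((n+1 : ℕ) : ℝ))^2 ≤ ((n+1 : ℕ) : ℝ)) :
    seedMeasure (TV (n+1)) pn {f | IsDynamo (torus (n+1)) {v | f v = true}}ᶜ
      ≤ ENNReal.ofReal (Bnd (Real.log ((n+1 : ℕ) : ℝ))) := by
  classical
  have hN1 : 1 < n + 1 := by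
    by_contra h
    have hn0 : n = 0 := by omega
    subst hn0
    norm_num at hL
  set N : ℕ := n + 1 with hNdef
  set L : ℝ := Real.log ((N : ℕ) : ℝ) with hLdef
  have hNpos : (0:ℝ) < ((N:ℕ):ℝ) := by positivity
  have hNR : ((N:ℕ):ℝ) = Real.exp L := (Real.exp_log hNpos).symm
  have hLpos : (0:ℝ) < L := by linarith
  have hp0 : 0 < pn := lt_of_lt_of_le (by positivity) hplo
  set K : ℕ := ⌈2 * L^2⌉₊ with hKdef
  have hKge : 2 * L^2 ≤ (K:ℝ) := Nat.le_ceil _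
  have hKle : (K:ℝ) ≤ 2 * L^2 + 1 := le_of_lt (Nat.ceil_lt_add_one (by positivity))
  have hL2 : 4 ≤ L^2 := by nlinarith
  have hK1 : 1 ≤ K := by
    have h : (1:ℝ) ≤ (K:ℝ) := by nlinarith
    exact_mod_cast h
  have hK0R : (0:ℝ) < (K:ℝ) := by
    have : (1:ℝ) ≤ (K:ℝ) := by exact_mod_cast hK1
    linarith
  have hKNR : (K:ℝ) ≤ ((N:ℕ):ℝ) := by nlinarith
  have hKN : K ≤ N := by exact_mod_cast hKNR
  set M₀ : ℕ := N / K with hM₀def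
  have hKM : K * M₀ ≤ N := by
    rw [hM₀def, mul_comm]
    exact Nat.div_mul_le_self N K
  have hM₀R : ((N:ℕ):ℝ)/(K:ℝ) - 1 ≤ (M₀:ℝ) := by
    have hmod := Nat.div_add_mod N K
    have hmlt : N % K < K := Nat.mod_lt _ (by omega)
    have hcast : (K:ℝ) * (M₀:ℝ) + ((N % K : ℕ):ℝ) = ((N:ℕ):ℝ) := by
      exact_mod_cast congrArg (Nat.cast : ℕ → ℝ) hmod
    have hmltR : ((N % K : ℕ):ℝ) < (K:ℝ) := by exact_mod_cast hmlt
    rw [sub_le_iff_le_add, div_le_iff₀ hK0R]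
    nlinarith
  have hM₀low : Real.exp L / (5 * L^2) ≤ (M₀:ℝ) := by
    have hKle' : (K:ℝ) ≤ 2.5 * L^2 := by nlinarith
    have h1 : ((N:ℕ):ℝ)/(2.5 * L^2) ≤ ((N:ℕ):ℝ)/(K:ℝ) := by
      rw [div_le_div_iff₀ (by positivity) hK0R]
      nlinarith
    have hA : 1 ≤ ((N:ℕ):ℝ)/(5*L^2) := by
      rw [le_div_iff₀ (by positivity)]
      linarith
    have hB : ((N:ℕ):ℝ)/(2.5*L^2) = 2*(((N:ℕ):ℝ)/(5*L^2)) := by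
      field_simp
      ring
    have : Real.exp L / (5*L^2) = ((N:ℕ):ℝ)/(5*L^2) := by rw [hNR]
    rw [this]
    linarith
  set q : ℝ := 1 - pn with hqdef
  have hq0 : 0 ≤ q := by simp only [hqdef]; linarith
  have hq1 : q < 1 := by simp only [hqdef]; linarith
  set r₀ : ℝ := ∏ k ∈ Icc 1 K, (1 - q^k) with hr₀def
  have hr₀lb : Real.exp (-(Real.pi^2/6)/pn) ≤ r₀ := prod_one_sub_pow_ge hp0 hp1 K
  have hpi2 : (0:ℝ) < Real.pi^2 := by positivity
  have hr₀lb2 : Real.exp (-(Real.pi^2/9.9) * L) ≤ r₀ := by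
    refine le_trans (Real.exp_le_exp.mpr ?_) hr₀lb
    rw [neg_div, neg_mul, neg_le_neg_iff]
    have hpl : 1.65 ≤ L * pn := by
      rw [div_le_iff₀ hLpos] at hplo
      linarith
    have h2 : 1/pn ≤ L/1.65 := by
      rw [div_le_div_iff₀ hp0 (by norm_num)]
      linarith
    calc Real.pi^2/6/pn = Real.pi^2/6 * (1/pn) := by ring
      _ ≤ Real.pi^2/6 * (L/1.65) := mul_le_mul_of_nonneg_left h2 (by positivity)
      _ = Real.pi^2/9.9 * L := by ring
  have hr₀0 : 0 ≤ r₀ := by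
    refine prod_nonneg fun k hk => ?_
    have : q^k ≤ 1 := pow_le_one₀ hq0 (le_of_lt hq1)
    linarith
  have hr₀1 : r₀ ≤ 1 := by
    refine prod_le_one (fun k hk => ?_) (fun k hk => ?_)
    · have : q^k ≤ 1 := pow_le_one₀ hq0 (le_of_lt hq1)
      linarith
    · have : 0 ≤ q^k := pow_nonneg hq0 k
      linarith
  -- ENNReal product conversions
  have hofr : ∀ k : ℕ, (1 : ENNReal) - ENNReal.ofReal q ^ k = ENNReal.ofReal (1 - q^k) := by
    intro k
    rw [ENNReal.ofReal_sub _ (pow_nonneg hq0 k), ENNReal.ofReal_one, ENNReal.ofReal_pow hq0]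
  have hnn : ∀ k : ℕ, 0 ≤ 1 - q^k := fun k => by
    have : q^k ≤ 1 := pow_le_one₀ hq0 (le_of_lt hq1)
    linarith
  have hprod1 : ∏ k ∈ range K, (1 - ENNReal.ofReal q ^ (k+1)) = ENNReal.ofReal r₀ := by
    rw [prod_congr rfl fun k _ => hofr (k+1),
      ← ENNReal.ofReal_prod_of_nonneg (fun k _ => hnn (k+1))]
    congr 1
    rw [hr₀def, show Icc 1 K = Ico 1 (K+1) from (Finset.Ico_add_one_right_eq_Icc 1 K).symm,
      Finset.prod_Ico_eq_prod_range]
    simp only [Nat.add_sub_cancel]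
    exact (prod_congr rfl fun k _ => by rw [add_comm]).symm
  have hprodIcc : ∏ k ∈ Icc 1 K, (1 - ENNReal.ofReal q ^ k) = ENNReal.ofReal r₀ := by
    rw [prod_congr rfl fun k _ => hofr k,
      ← ENNReal.ofReal_prod_of_nonneg (fun k _ => hnn k)]
  have hprod2 : ENNReal.ofReal r₀ ≤ ∏ k ∈ Icc 1 (K-1), (1 - ENNReal.ofReal q ^ k) := by
    rw [← hprodIcc]
    have hins : Icc 1 K = insert K (Icc 1 (K-1)) := by
      ext x
      simp only [Finset.mem_insert, Finset.mem_Icc]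
      omega
    rw [hins, prod_insert (by simp only [Finset.mem_Icc]; omega)]
    calc (1 - ENNReal.ofReal q ^ K) * ∏ k ∈ Icc 1 (K-1), (1 - ENNReal.ofReal q ^ k)
        ≤ 1 * ∏ k ∈ Icc 1 (K-1), (1 - ENNReal.ofReal q ^ k) :=
          mul_le_mul_left tsub_le_self _
      _ = _ := one_mul _
  have hρ : ENNReal.ofReal (r₀^2) ≤ (∏ k ∈ range K, (1 - ENNReal.ofReal q ^ (k+1)))
      * ∏ k ∈ Icc 1 (K-1), (1 - ENNReal.ofReal q ^ k) := by
    rw [pow_two, ENNReal.ofReal_mul hr₀0]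
    calc ENNReal.ofReal r₀ * ENNReal.ofReal r₀
        ≤ ENNReal.ofReal r₀ * ∏ k ∈ Icc 1 (K-1), (1 - ENNReal.ofReal q ^ k) :=
          mul_le_mul_right hprod2 _
      _ = _ := by rw [hprod1]
  -- the bad nucleus event
  have hbadnuc : seedMeasure (TV N) pn
      (⋂ rs ∈ (range M₀) ×ˢ (range M₀), (Nuc N K ((K * rs.1 : ℕ) : ZMod N)
        ((K * rs.2 : ℕ) : ZMod N))ᶜ)
      ≤ ENNReal.ofReal (Real.exp (-(Real.exp ((2 - Real.pi^2/4.95) * L) / (25 * L^4)))) := by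
    rw [badnuc_prob N (le_of_lt hp0) hp1 hK1 hKN hKM]
    have hr₀sq : r₀^2 ≤ 1 := pow_le_one₀ hr₀0 hr₀1
    have hr₀sq0 : (0:ℝ) ≤ r₀^2 := by positivity
    have honesq : (0:ℝ) ≤ 1 - r₀^2 := by linarith
    calc (1 - ((∏ k ∈ range K, (1 - ENNReal.ofReal (1-pn) ^ (k+1)))
          * ∏ k ∈ Icc 1 (K-1), (1 - ENNReal.ofReal (1-pn) ^ k))) ^ (M₀ * M₀)
        ≤ (ENNReal.ofReal (1 - r₀^2)) ^ (M₀ * M₀) := by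
          apply pow_le_pow_left'
          rw [ENNReal.ofReal_sub 1 (by positivity : (0:ℝ) ≤ r₀^2), ENNReal.ofReal_one]
          exact tsub_le_tsub_left hρ 1
      _ = ENNReal.ofReal ((1 - r₀^2)^(M₀*M₀)) := (ENNReal.ofReal_pow honesq _).symm
      _ ≤ ENNReal.ofReal (Real.exp (-(Real.exp ((2 - Real.pi^2/4.95) * L) / (25 * L^4)))) := by
          apply ENNReal.ofReal_le_ofReal
          have step1 : (1 - r₀^2)^(M₀*M₀) ≤ Real.exp (-(r₀^2))^(M₀*M₀) := by
            apply pow_le_pow_left₀ honesq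
            have := Real.add_one_le_exp (-(r₀^2))
            linarith
          have step2 : Real.exp (-(r₀^2))^(M₀*M₀) = Real.exp (-(r₀^2 * ((M₀*M₀ : ℕ):ℝ))) := by
            rw [← Real.exp_nat_mul]
            congr 1
            ring
          have step3 : Real.exp ((2 - Real.pi^2/4.95) * L) / (25 * L^4)
              ≤ r₀^2 * ((M₀*M₀ : ℕ):ℝ) := by
            have hM2 : Real.exp L/(5*L^2) * (Real.exp L/(5*L^2)) ≤ ((M₀*M₀:ℕ):ℝ) := by
              push_cast
              have h0 : (0:ℝ) ≤ Real.exp L/(5*L^2) := by positivity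
              nlinarith [hM₀low]
            have hr2 : Real.exp (-(Real.pi^2/4.95)*L) ≤ r₀^2 := by
              have heq : Real.exp (-(Real.pi^2/4.95)*L)
                  = Real.exp (-(Real.pi^2/9.9)*L) * Real.exp (-(Real.pi^2/9.9)*L) := by
                rw [← Real.exp_add]
                congr 1
                ring
              rw [heq]
              calc Real.exp (-(Real.pi^2/9.9)*L) * Real.exp (-(Real.pi^2/9.9)*L)
                  ≤ r₀ * r₀ := mul_le_mul hr₀lb2 hr₀lb2 (le_of_lt (Real.exp_pos _))
                    (le_trans (le_of_lt (Real.exp_pos _)) hr₀lb2)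
                _ = r₀^2 := (pow_two r₀).symm
            have heq2 : Real.exp ((2 - Real.pi^2/4.95) * L) / (25 * L^4)
                = Real.exp (-(Real.pi^2/4.95)*L) * (Real.exp L/(5*L^2) * (Real.exp L/(5*L^2))) := by
              rw [div_mul_div_comm, ← Real.exp_add, ← mul_div_assoc, ← Real.exp_add]
              have e4 : (5*L^2) * (5*L^2) = 25 * L^4 := by ring
              rw [e4]
              congr 2
              ring
            rw [heq2]
            exact mul_le_mul hr2 hM2 (by positivity)
              (le_trans (le_of_lt (Real.exp_pos _)) hr2)
          calc (1 - r₀^2)^(M₀*M₀) ≤ Real.exp (-(r₀^2))^(M₀*M₀) := step1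
            _ = Real.exp (-(r₀^2 * ((M₀*M₀ : ℕ):ℝ))) := step2
            _ ≤ Real.exp (-(Real.exp ((2 - Real.pi^2/4.95) * L) / (25 * L^4))) := by
                apply Real.exp_le_exp.mpr
                rw [neg_le_neg_iff]
                calc Real.exp ((2 - Real.pi^2/4.95) * L) / (25 * L^4)
                    ≤ r₀^2 * ((M₀*M₀ : ℕ):ℝ) := step3
                  _ = r₀^2 * ((M₀*M₀ : ℕ):ℝ) := rfl
  -- segment events
  have hseg : ((N:ℕ):ENNReal)^2 * ENNReal.ofReal (1-pn) ^ K
      ≤ ENNReal.ofReal (Real.exp (-(1.3)*L)) := by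
    have heq : ((N:ℕ):ENNReal)^2 * ENNReal.ofReal (1-pn) ^ K
        = ENNReal.ofReal (((N:ℕ):ℝ)^2 * q^K) := by
      rw [ENNReal.ofReal_mul (by positivity), ENNReal.ofReal_pow (by positivity),
        ENNReal.ofReal_pow hq0, ENNReal.ofReal_natCast]
    rw [heq]
    apply ENNReal.ofReal_le_ofReal
    have h1 : q ≤ Real.exp (-pn) := by
      have := Real.add_one_le_exp (-pn)
      simp only [hqdef]
      linarith
    have h2 : q^K ≤ Real.exp (-pn)^K := pow_le_pow_left₀ hq0 h1 K
    have h3 : Real.exp (-pn)^K = Real.exp ((K:ℝ) * (-pn)) := (Real.exp_nat_mul _ _).symm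
    have h4 : 3.3 * L ≤ (K:ℝ) * pn := by
      have hmul : (2*L^2) * (1.65/L) ≤ (K:ℝ) * pn :=
        mul_le_mul hKge hplo (by positivity) (by positivity)
      have hid : 2*L^2 * (1.65/L) = 3.3*L := by
        field_simp
        ring
      linarith
    calc ((N:ℕ):ℝ)^2 * q^K ≤ ((N:ℕ):ℝ)^2 * Real.exp ((K:ℝ)*(-pn)) := by
          rw [← h3]
          exact mul_le_mul_of_nonneg_left h2 (by positivity)
      _ = Real.exp (2*L) * Real.exp ((K:ℝ)*(-pn)) := by
          rw [hNR, ← Real.exp_nat_mul]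
          norm_num
      _ = Real.exp (2*L + (K:ℝ)*(-pn)) := (Real.exp_add _ _).symm
      _ ≤ Real.exp (-(1.3)*L) := Real.exp_le_exp.mpr (by nlinarith)
  -- assemble
  have hsub := dyn_compl_subset N hN1 K M₀ hK1
  calc seedMeasure (TV N) pn {f | IsDynamo (torus N) {v | f v = true}}ᶜ
      ≤ seedMeasure (TV N) pn
        ((⋃ v : TV N, {f | ∀ i < K, f (v.1 + (i:ZMod N), v.2) = false}) ∪
        (⋃ v : TV N, {f | ∀ j < K, f (v.1, v.2 + (j:ZMod N)) = false}) ∪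
        (⋂ rs ∈ (range M₀) ×ˢ (range M₀), (Nuc N K ((K * rs.1 : ℕ) : ZMod N)
          ((K * rs.2 : ℕ) : ZMod N))ᶜ)) := measure_mono hsub
    _ ≤ seedMeasure (TV N) pn
        ((⋃ v : TV N, {f | ∀ i < K, f (v.1 + (i:ZMod N), v.2) = false}) ∪
        (⋃ v : TV N, {f | ∀ j < K, f (v.1, v.2 + (j:ZMod N)) = false}))
        + seedMeasure (TV N) pn
        (⋂ rs ∈ (range M₀) ×ˢ (range M₀), (Nuc N K ((K * rs.1 : ℕ) : ZMod N)
          ((K * rs.2 : ℕ) : ZMod N))ᶜ) := measure_union_le _ _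
    _ ≤ (seedMeasure (TV N) pn (⋃ v : TV N, {f | ∀ i < K, f (v.1 + (i:ZMod N), v.2) = false})
        + seedMeasure (TV N) pn (⋃ v : TV N, {f | ∀ j < K, f (v.1, v.2 + (j:ZMod N)) = false}))
        + seedMeasure (TV N) pn
        (⋂ rs ∈ (range M₀) ×ˢ (range M₀), (Nuc N K ((K * rs.1 : ℕ) : ZMod N)
          ((K * rs.2 : ℕ) : ZMod N))ᶜ) := add_le_add_left (measure_union_le _ _) _
    _ ≤ (ENNReal.ofReal (Real.exp (-(1.3)*L)) + ENNReal.ofReal (Real.exp (-(1.3)*L)))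
        + ENNReal.ofReal (Real.exp (-(Real.exp ((2 - Real.pi^2/4.95) * L) / (25 * L^4)))) := by
        refine add_le_add (add_le_add ?_ ?_) hbadnuc
        · exact le_trans (bad1_prob N (le_of_lt hp0) hp1 hKN) hseg
        · exact le_trans (bad2_prob N (le_of_lt hp0) hp1 hKN) hseg
    _ = ENNReal.ofReal (Bnd L) := by
        rw [← ENNReal.ofReal_add (by positivity) (by positivity),
          ← ENNReal.ofReal_add (by positivity) (by positivity)]
        congr 1
        rw [Bnd]
        ring

end Endgame

/-- If `1.65 / ln n ≤ p n ≤ 1` for all sufficiently large `n`, then the probability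
that the random seed set `S^p` is a dynamo on the toroidal mesh of size `n` tends to `1`. -/
theorem torus_dynamo_whp (p : ℕ → ℝ)
    (hp : ∀ᶠ n : ℕ in atTop, 1.65 / Real.log n ≤ p n ∧ p n ≤ 1) :
    Tendsto
      (fun n : ℕ =>
        seedMeasure (ZMod (n + 1) × ZMod (n + 1)) (p (n + 1))
          {f | IsDynamo (torus (n + 1)) {v | f v = true}})
      atTop (nhds 1) := by
  classical
  have hp' : ∀ᶠ n : ℕ in atTop,
      1.65 / Real.log ((n+1 : ℕ) : ℝ) ≤ p (n+1) ∧ p (n+1) ≤ 1 := by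
    have h := (tendsto_add_atTop_nat 1).eventually hp
    simpa using h
  have hLt : Tendsto (fun n : ℕ => Real.log ((n+1:ℕ):ℝ)) atTop atTop := by
    have h1 : Tendsto (fun n : ℕ => ((n+1:ℕ):ℝ)) atTop atTop :=
      tendsto_natCast_atTop_atTop.comp (tendsto_add_atTop_nat 1)
    exact Real.tendsto_log_atTop.comp h1
  have hL2ev : ∀ᶠ n : ℕ in atTop, 2 ≤ Real.log ((n+1:ℕ):ℝ) := hLt.eventually_ge_atTop 2
  have hE3ev : ∀ᶠ n : ℕ in atTop,
      5 * (Real.log ((n+1:ℕ):ℝ))^2 ≤ ((n+1:ℕ):ℝ) := by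
    have h1 : Tendsto (fun y : ℝ => Real.exp y / y^2) atTop atTop :=
      Real.tendsto_exp_div_pow_atTop 2
    have h2 := (h1.comp hLt).eventually_ge_atTop 5
    filter_upwards [h2, hL2ev] with n hn hLn
    have hLpos : 0 < Real.log ((n+1:ℕ):ℝ) := by linarith
    have hn' : 5 ≤ Real.exp (Real.log ((n+1:ℕ):ℝ)) / (Real.log ((n+1:ℕ):ℝ))^2 := hn
    rw [Real.exp_log (by positivity)] at hn'
    rw [le_div_iff₀ (by positivity)] at hn'
    linarith
  -- Bnd tends to 0
  have hδ : (0:ℝ) < 2 - Real.pi^2/4.95 := by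
    have h1 : Real.pi < 3.141593 := Real.pi_lt_d6
    have h2 : 0 < Real.pi := Real.pi_pos
    have h3 : Real.pi * Real.pi < 9.87 := by nlinarith
    have h4 : Real.pi^2 = Real.pi * Real.pi := pow_two _
    rw [h4]
    have h5 : Real.pi * Real.pi / 4.95 < 2 := by
      rw [div_lt_iff₀ (by norm_num)]
      nlinarith
    linarith
  have hBnd0 : Tendsto (fun n : ℕ => Bnd (Real.log ((n+1:ℕ):ℝ))) atTop (nhds 0) := by
    have hterm1 : Tendsto (fun L : ℝ => 2 * Real.exp (-(1.3) * L)) atTop (nhds 0) := by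
      have h1 : Tendsto (fun L : ℝ => -(1.3) * L) atTop atBot := by
        have h2 : Tendsto (fun L : ℝ => (1.3:ℝ) * L) atTop atTop :=
          Tendsto.const_mul_atTop (by norm_num) tendsto_id
        have h3 := tendsto_neg_atTop_atBot.comp h2
        refine h3.congr fun L => ?_
        simp [neg_mul]
      have := Real.tendsto_exp_atBot.comp h1
      simpa using this.const_mul 2
    have hterm2 : Tendsto
        (fun L : ℝ => Real.exp (-(Real.exp ((2 - Real.pi^2/4.95) * L) / (25 * L^4))))
        atTop (nhds 0) := by
      have hW : Tendsto
          (fun L : ℝ => Real.exp ((2 - Real.pi^2/4.95) * L) / (25 * L^4)) atTop atTop := by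
        set δ : ℝ := 2 - Real.pi^2/4.95 with hδdef
        have h1 : Tendsto (fun y : ℝ => Real.exp y / y^4) atTop atTop :=
          Real.tendsto_exp_div_pow_atTop 4
        have h2 : Tendsto (fun L : ℝ => δ * L) atTop atTop :=
          Tendsto.const_mul_atTop hδ tendsto_id
        have h3 : Tendsto (fun L : ℝ => Real.exp (δ * L) / (δ * L)^4 * (δ^4/25))
            atTop atTop := (h1.comp h2).atTop_mul_const (by positivity)
        apply h3.congr'
        filter_upwards [eventually_gt_atTop (0:ℝ)] with L hL
        have hδL : δ * L ≠ 0 := by positivity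
        field_simp
      have h4 : Tendsto
          (fun L : ℝ => -(Real.exp ((2 - Real.pi^2/4.95) * L) / (25 * L^4))) atTop atBot :=
        tendsto_neg_atTop_atBot.comp hW
      exact Real.tendsto_exp_atBot.comp h4
    have := (hterm1.add hterm2).comp hLt
    simpa [Bnd, Function.comp_def] using this
  -- complement tends to 0
  have hcompl : Tendsto (fun n : ℕ => seedMeasure (ZMod (n+1) × ZMod (n+1)) (p (n+1))
      {f | IsDynamo (torus (n+1)) {v | f v = true}}ᶜ) atTop (nhds 0) := by
    refine tendsto_of_tendsto_of_tendsto_of_le_of_le'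
      (g := fun _ => (0:ENNReal))
      (h := fun n => ENNReal.ofReal (Bnd (Real.log ((n+1:ℕ):ℝ))))
      tendsto_const_nhds ?_ ?_ ?_
    · have h := ENNReal.tendsto_ofReal hBnd0
      simpa using h
    · exact Eventually.of_forall fun n => zero_le
    · filter_upwards [hp', hL2ev, hE3ev] with n hpn hLn hE3n
      exact compl_bound n (p (n+1)) hpn.1 hpn.2 hLn hE3n
  -- conclude
  have hprob : ∀ᶠ n : ℕ in atTop,
      seedMeasure (ZMod (n+1) × ZMod (n+1)) (p (n+1))
        {f | IsDynamo (torus (n+1)) {v | f v = true}}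
      = 1 - seedMeasure (ZMod (n+1) × ZMod (n+1)) (p (n+1))
        {f | IsDynamo (torus (n+1)) {v | f v = true}}ᶜ := by
    filter_upwards [hp', hL2ev] with n hpn hLn
    have hLpos : 0 < Real.log ((n+1:ℕ):ℝ) := by linarith
    haveI := seed_prob (V := ZMod (n+1) × ZMod (n+1)) (p := p (n+1))
      (le_trans (by positivity) hpn.1) hpn.2
    have h := prob_compl_eq_one_sub (μ := seedMeasure (ZMod (n+1) × ZMod (n+1)) (p (n+1)))
      (meas_all ({f : (ZMod (n+1) × ZMod (n+1)) → Bool |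
        IsDynamo (torus (n+1)) {v | f v = true}}ᶜ))
    rwa [compl_compl] at h
  have h1 : Tendsto (fun n : ℕ => 1 - seedMeasure (ZMod (n+1) × ZMod (n+1)) (p (n+1))
      {f | IsDynamo (torus (n+1)) {v | f v = true}}ᶜ) atTop (nhds 1) := by
    have hc : Tendsto (fun x : ENNReal => 1 - x) (nhds 0) (nhds 1) := by
      have h2 := (ENNReal.continuous_sub_left (a := 1) (by norm_num)).tendsto 0
      simpa using h2
    exact hc.comp hcompl
  exact Tendsto.congr' (hprob.mono fun n hn => hn.symm) h1
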